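/- Let X, Y be finite sets, c : X × Y → ℝ≥0, and for probability mass functions let E(Q_X, Q_Y) denote the optimal transport cost. For product measures: for every n ≥ 1, E(P_X^n, P_Y^n) = E(P_X, P_Y), where the cost on X^n × Y^n is the additive cost c_n(x^n, y^n) = (1/n) Σ_{i=1}^n c(x_i, y_i). -/

import Mathlib

open Finset

/-- `p` is a probability mass function on a finite set. -/
def IsPMF {X : Type*} [Fintype X] (p : X → ℝ) : Prop :=
  (∀ x, 0 ≤ p x) ∧ ∑ x, p x = 1

/-- `π` is a coupling of the probability mass functions `pX` and `pY`. -/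
def IsCoupling {X Y : Type*} [Fintype X] [Fintype Y]
    (pX : X → ℝ) (pY : Y → ℝ) (π : X × Y → ℝ) : Prop :=
  IsPMF π ∧ (∀ x, ∑ y, π (x, y) = pX x) ∧ (∀ y, ∑ x, π (x, y) = pY y)

/-- The optimal transport cost between two probability mass functions. -/
noncomputable def OTCost {X Y : Type*} [Fintype X] [Fintype Y]
    (c : X × Y → ℝ) (pX : X → ℝ) (pY : Y → ℝ) : ℝ :=
  sInf {r | ∃ π, IsCoupling pX pY π ∧ r = ∑ z, π z * c z}

lemma sum_fn_prod {ι κ : Type*} [Fintype ι] [DecidableEq ι] [Fintype κ] (f : ι → κ → ℝ) :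
    ∑ g : ι → κ, ∏ i, f i (g i) = ∏ i, ∑ k, f i k := by
  rw [Finset.prod_univ_sum, Fintype.piFinset_univ]

lemma key {ι κ : Type*} [Fintype ι] [DecidableEq ι] [Fintype κ] (f : ι → κ → ℝ) (i : ι)
    (h : κ → ℝ) (hf : ∀ j, ∑ k, f j k = 1) :
    ∑ g : ι → κ, (h (g i) * ∏ j, f j (g j)) = ∑ k, h k * f i k := by
  have step : ∀ g : ι → κ, h (g i) * ∏ j, f j (g j)
      = ∏ j, (f j (g j) * (if i = j then h (g j) else 1)) := by
    intro g
    rw [Finset.prod_mul_distrib, Finset.prod_ite_eq, if_pos (mem_univ i)]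
    ring
  calc ∑ g : ι → κ, (h (g i) * ∏ j, f j (g j))
      = ∑ g : ι → κ, ∏ j, (fun (j : ι) (k : κ) => f j k * (if i = j then h k else 1)) j (g j) :=
        Finset.sum_congr rfl fun g _ => step g
    _ = ∏ j, ∑ k, f j k * (if i = j then h k else 1) :=
        sum_fn_prod (fun (j : ι) (k : κ) => f j k * (if i = j then h k else 1))
    _ = ∑ k, h k * f i k := by
        rw [Finset.prod_eq_single i]
        · simp [mul_comm]
        · intro b _ hb
          simp only [if_neg (Ne.symm hb), mul_one, hf b]
        · intro hi; exact absurd (mem_univ i) hi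

lemma fib_sum {ι Z : Type*} [Fintype ι] [DecidableEq ι] [Fintype Z] [DecidableEq Z]
    (q : Z → ℝ) (hq : ∑ k, q k = 1) (i : ι) (x : Z) :
    ∑ g : ι → Z, (if g i = x then ∏ j, q (g j) else 0) = q x := by
  have h := key (fun _ k => q k) i (fun k => if k = x then 1 else 0) (fun _ => hq)
  simpa [ite_mul, Finset.sum_ite_eq'] using h

lemma prodCoupling {X Y : Type*} [Fintype X] [Fintype Y] (pX : X → ℝ) (pY : Y → ℝ)
    (hpX : IsPMF pX) (hpY : IsPMF pY) :
    IsCoupling pX pY (fun z => pX z.1 * pY z.2) := by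
  refine ⟨⟨fun z => mul_nonneg (hpX.1 _) (hpY.1 _), ?_⟩, fun x => ?_, fun y => ?_⟩
  · rw [Fintype.sum_prod_type]
    simp [← Finset.mul_sum, hpY.2, hpX.2]
  · simp [← Finset.mul_sum, hpY.2]
  · simp [← Finset.sum_mul, hpX.2]

lemma bddS {X Y : Type*} [Fintype X] [Fintype Y] (c : X × Y → ℝ) (hc : ∀ z, 0 ≤ c z)
    (pX : X → ℝ) (pY : Y → ℝ) :
    BddBelow {r | ∃ π, IsCoupling pX pY π ∧ r = ∑ z, π z * c z} := by
  refine ⟨0, ?_⟩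
  rintro r ⟨π, hπ, rfl⟩
  exact Finset.sum_nonneg fun z _ => mul_nonneg (hπ.1.1 z) (hc z)

lemma pmf_pi {ι X : Type*} [Fintype ι] [DecidableEq ι] [Fintype X] (p : X → ℝ)
    (hp : IsPMF p) : IsPMF (fun g : ι → X => ∏ i, p (g i)) := by
  refine ⟨fun g => Finset.prod_nonneg fun i _ => hp.1 _, ?_⟩
  rw [sum_fn_prod (fun _ k => p k)]
  simp [hp.2]

/-- tensorization of the OT cost: for the additive cost
`c_n(x^n,y^n) = (1/n) Σᵢ c(xᵢ,yᵢ)` and the `n`-fold product marginals,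
`E(P_X^n, P_Y^n) = E(P_X, P_Y)`. -/
theorem stmt9 {X Y : Type*} [Fintype X] [Fintype Y]
    (c : X × Y → ℝ) (hc : ∀ z, 0 ≤ c z)
    (pX : X → ℝ) (pY : Y → ℝ) (hpX : IsPMF pX) (hpY : IsPMF pY)
    (n : ℕ) (hn : 1 ≤ n) :
    OTCost (fun p : (Fin n → X) × (Fin n → Y) => (1 / n : ℝ) * ∑ i, c (p.1 i, p.2 i))
      (fun xs => ∏ i, pX (xs i)) (fun ys => ∏ i, pY (ys i))
      = OTCost c pX pY := by
  classical
  have hn' : (n : ℝ) ≠ 0 := Nat.cast_ne_zero.2 (by omega)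
  have hcn : ∀ p : (Fin n → X) × (Fin n → Y),
      0 ≤ (1 / n : ℝ) * ∑ i, c (p.1 i, p.2 i) :=
    fun p => mul_nonneg (by positivity) (Finset.sum_nonneg fun i _ => hc _)
  unfold OTCost
  apply le_antisymm
  · -- sInf Sn ≤ sInf S
    refine le_csInf ⟨_, ⟨_, prodCoupling pX pY hpX hpY, rfl⟩⟩ ?_
    rintro r ⟨π, hπ, rfl⟩
    apply csInf_le (bddS _ hcn _ _)
    refine ⟨fun p => ∏ i, π (p.1 i, p.2 i), ?_, ?_⟩
    · -- coupling
      have margX : ∀ xs : Fin n → X, ∑ ys : Fin n → Y, ∏ i, π (xs i, ys i)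
          = ∏ i, pX (xs i) := by
        intro xs
        rw [sum_fn_prod (fun i y => π (xs i, y))]
        exact Finset.prod_congr rfl fun i _ => hπ.2.1 (xs i)
      have margY : ∀ ys : Fin n → Y, ∑ xs : Fin n → X, ∏ i, π (xs i, ys i)
          = ∏ i, pY (ys i) := by
        intro ys
        rw [sum_fn_prod (fun i x => π (x, ys i))]
        exact Finset.prod_congr rfl fun i _ => hπ.2.2 (ys i)
      refine ⟨⟨fun p => Finset.prod_nonneg fun i _ => hπ.1.1 _, ?_⟩,
        fun xs => margX xs, fun ys => margY ys⟩
      rw [Fintype.sum_prod_type]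
      calc ∑ xs : Fin n → X, ∑ ys : Fin n → Y, ∏ i, π (xs i, ys i)
          = ∑ xs : Fin n → X, ∏ i, pX (xs i) :=
            Finset.sum_congr rfl fun xs _ => margX xs
        _ = 1 := (pmf_pi pX hpX).2
    · -- cost
      have step1 : ∀ i : Fin n,
          ∑ g : Fin n → X × Y, (c (g i) * ∏ j, π (g j)) = ∑ z, c z * π z :=
        fun i => key (fun _ z => π z) i c (fun _ => hπ.1.2)
      have reidx :
          ∑ p : (Fin n → X) × (Fin n → Y),
              (∏ i, π (p.1 i, p.2 i)) * ((1 / n : ℝ) * ∑ i, c (p.1 i, p.2 i))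
          = ∑ g : Fin n → X × Y, (∏ j, π (g j)) * ((1 / n : ℝ) * ∑ i, c (g i)) := by
        rw [← Equiv.sum_comp (Equiv.arrowProdEquivProdArrow (Fin n) (fun _ => X) (fun _ => Y))
          (fun p : (Fin n → X) × (Fin n → Y) =>
            (∏ i, π (p.1 i, p.2 i)) * ((1 / n : ℝ) * ∑ i, c (p.1 i, p.2 i)))]
        exact Finset.sum_congr rfl fun g _ => by
          simp [Equiv.arrowProdEquivProdArrow]
      symm
      calc ∑ p : (Fin n → X) × (Fin n → Y),
              (∏ i, π (p.1 i, p.2 i)) * ((1 / n : ℝ) * ∑ i, c (p.1 i, p.2 i))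
          = ∑ g : Fin n → X × Y, (∏ j, π (g j)) * ((1 / n : ℝ) * ∑ i, c (g i)) := reidx
        _ = ∑ g : Fin n → X × Y, ∑ i : Fin n, (1 / n : ℝ) * (c (g i) * ∏ j, π (g j)) := by
            refine Finset.sum_congr rfl fun g _ => ?_
            rw [Finset.mul_sum, Finset.mul_sum]
            exact Finset.sum_congr rfl fun i _ => by ring
        _ = ∑ i : Fin n, ∑ g : Fin n → X × Y, (1 / n : ℝ) * (c (g i) * ∏ j, π (g j)) :=
            Finset.sum_comm
        _ = ∑ i : Fin n, (1 / n : ℝ) * ∑ z, c z * π z := by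
            refine Finset.sum_congr rfl fun i _ => ?_
            rw [← Finset.mul_sum, step1 i]
        _ = ∑ z, π z * c z := by
            rw [Finset.sum_const, Finset.card_univ, Fintype.card_fin, nsmul_eq_mul,
              show (n : ℝ) * ((1 / n : ℝ) * ∑ z, c z * π z) = ∑ z, c z * π z by
                field_simp]
            exact Finset.sum_congr rfl fun z _ => mul_comm _ _
  · -- sInf S ≤ sInf Sn
    refine le_csInf ⟨_, ⟨_, prodCoupling _ _ (pmf_pi pX hpX) (pmf_pi pY hpY), rfl⟩⟩ ?_
    rintro r ⟨Pn, hPn, rfl⟩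
    set πm : Fin n → X × Y → ℝ :=
      fun i z => ∑ p : (Fin n → X) × (Fin n → Y),
        if (p.1 i, p.2 i) = z then Pn p else 0 with hπm
    have nn : ∀ i z, 0 ≤ πm i z := by
      intro i z
      refine Finset.sum_nonneg fun p _ => ?_
      split
      · exact hPn.1.1 p
      · exact le_rfl
    have m1 : ∀ i x, ∑ y, πm i (x, y) = pX x := by
      intro i x
      rw [Finset.sum_comm]
      have inner : ∀ p : (Fin n → X) × (Fin n → Y),
          ∑ y, (if (p.1 i, p.2 i) = (x, y) then Pn p else 0)
          = if p.1 i = x then Pn p else 0 := by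
        intro p
        by_cases h : p.1 i = x
        · simp [Prod.ext_iff, h, Finset.sum_ite_eq]
        · simp [Prod.ext_iff, h]
      rw [Finset.sum_congr rfl fun p _ => inner p, Fintype.sum_prod_type]
      have inner2 : ∀ xs : Fin n → X,
          ∑ ys : Fin n → Y, (if xs i = x then Pn (xs, ys) else 0)
          = if xs i = x then ∏ j, pX (xs j) else 0 := by
        intro xs
        by_cases h : xs i = x
        · simp only [if_pos h]; exact hPn.2.1 xs
        · simp [h]
      rw [Finset.sum_congr rfl fun xs _ => inner2 xs]
      exact fib_sum pX hpX.2 i x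
    have m2 : ∀ i y, ∑ x, πm i (x, y) = pY y := by
      intro i y
      rw [Finset.sum_comm]
      have inner : ∀ p : (Fin n → X) × (Fin n → Y),
          ∑ x, (if (p.1 i, p.2 i) = (x, y) then Pn p else 0)
          = if p.2 i = y then Pn p else 0 := by
        intro p
        by_cases h : p.2 i = y
        · simp [Prod.ext_iff, h, Finset.sum_ite_eq]
        · simp [Prod.ext_iff, h]
      rw [Finset.sum_congr rfl fun p _ => inner p, Fintype.sum_prod_type,
        Finset.sum_comm]
      have inner2 : ∀ ys : Fin n → Y,
          ∑ xs : Fin n → X, (if ys i = y then Pn (xs, ys) else 0)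
          = if ys i = y then ∏ j, pY (ys j) else 0 := by
        intro ys
        by_cases h : ys i = y
        · simp only [if_pos h]; exact hPn.2.2 ys
        · simp [h]
      rw [Finset.sum_congr rfl fun ys _ => inner2 ys]
      exact fib_sum pY hpY.2 i y
    have tot : ∀ i, ∑ z : X × Y, πm i z = 1 := by
      intro i
      rw [Fintype.sum_prod_type]
      calc ∑ x, ∑ y, πm i (x, y) = ∑ x, pX x :=
            Finset.sum_congr rfl fun x _ => m1 i x
        _ = 1 := hpX.2
    have cost_i : ∀ i, ∑ z : X × Y, πm i z * c z
        = ∑ p : (Fin n → X) × (Fin n → Y), Pn p * c (p.1 i, p.2 i) := by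
      intro i
      have expand : ∀ z : X × Y, πm i z * c z
          = ∑ p : (Fin n → X) × (Fin n → Y),
              (if (p.1 i, p.2 i) = z then Pn p * c z else 0) := by
        intro z
        rw [hπm]
        rw [Finset.sum_mul]
        exact Finset.sum_congr rfl fun p _ => by rw [ite_mul, zero_mul]
      rw [Finset.sum_congr rfl fun z _ => expand z, Finset.sum_comm]
      refine Finset.sum_congr rfl fun p _ => ?_
      simp [Finset.sum_ite_eq]
    have hOT : ∀ i : Fin n, sInf {r | ∃ π, IsCoupling pX pY π ∧ r = ∑ z, π z * c z}
        ≤ ∑ p : (Fin n → X) × (Fin n → Y), Pn p * c (p.1 i, p.2 i) := by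
      intro i
      rw [← cost_i i]
      exact csInf_le (bddS c hc pX pY) ⟨πm i, ⟨⟨nn i, tot i⟩, m1 i, m2 i⟩, rfl⟩
    have hsum : (n : ℝ) * sInf {r | ∃ π, IsCoupling pX pY π ∧ r = ∑ z, π z * c z}
        ≤ ∑ i : Fin n, ∑ p : (Fin n → X) × (Fin n → Y), Pn p * c (p.1 i, p.2 i) := by
      calc (n : ℝ) * sInf _ = ∑ _i : Fin n, sInf _ := by
            rw [Finset.sum_const, Finset.card_univ, Fintype.card_fin, nsmul_eq_mul]
        _ ≤ _ := Finset.sum_le_sum fun i _ => hOT i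
    have costeq : ∑ p : (Fin n → X) × (Fin n → Y),
        Pn p * ((1 / n : ℝ) * ∑ i, c (p.1 i, p.2 i))
        = (1 / n : ℝ) * ∑ i : Fin n, ∑ p : (Fin n → X) × (Fin n → Y),
            Pn p * c (p.1 i, p.2 i) := by
      rw [Finset.mul_sum]
      rw [show (∑ p : (Fin n → X) × (Fin n → Y),
          Pn p * ((1 / n : ℝ) * ∑ i, c (p.1 i, p.2 i)))
          = ∑ p : (Fin n → X) × (Fin n → Y), ∑ i : Fin n,
              (1 / n : ℝ) * (Pn p * c (p.1 i, p.2 i)) from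
        Finset.sum_congr rfl fun p _ => by
          rw [Finset.mul_sum, Finset.mul_sum]
          exact Finset.sum_congr rfl fun i _ => by ring]
      rw [Finset.sum_comm]
      exact Finset.sum_congr rfl fun i _ => (Finset.mul_sum _ _ _).symm
    rw [costeq]
    calc sInf _ = (1 / n : ℝ) * ((n : ℝ) * sInf _) := by field_simp
      _ ≤ (1 / n : ℝ) * ∑ i : Fin n, ∑ p : (Fin n → X) × (Fin n → Y),
            Pn p * c (p.1 i, p.2 i) :=
          mul_le_mul_of_nonneg_left hsum (by positivity)
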